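/- If M ∈ ℰ₃ and dim(M) = n, then χ(M) ≤ ⌊n/2⌋ + 1. Moreover, for every n ≥ 1 there exists an n-dimensional matroid M ∈ ℰ₃ with χ(M) = ⌊n/2⌋ + 1. -/

import Mathlib

/-- A simple binary matroid `M = (E, G)`: a dimension `n` together with a ground set `E`
of nonzero vectors of `𝔽₂ⁿ` (the points of `G = 𝔽₂ⁿ \ {0}`). -/
structure BinMatroid where
  dim : ℕ
  E : Set (Fin dim → ZMod 2)
  zero_not_mem : 0 ∉ E

namespace BinMatroid

/-- `M.HasIR N` : `M` contains `N` as an induced restriction, i.e. there is an injective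
linear map `φ` with `φ(E(N)) = E(M) ∩ (φ(G') \ {0})`. -/
def HasIR (M N : BinMatroid) : Prop :=
  ∃ φ : (Fin N.dim → ZMod 2) →ₗ[ZMod 2] (Fin M.dim → ZMod 2),
    Function.Injective φ ∧ φ '' N.E = M.E ∩ (Set.range φ \ {0})

/-- Isomorphism of binary matroids: a bijective induced embedding. -/
def Iso (M N : BinMatroid) : Prop :=
  ∃ φ : (Fin N.dim → ZMod 2) →ₗ[ZMod 2] (Fin M.dim → ZMod 2),
    Function.Bijective φ ∧ φ '' N.E = M.E ∩ (Set.range φ \ {0})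

/-- The critical number of the induced restriction of the ground set `E` to the flat of
the subspace `F`: the least `k` such that some flat of `F` of dimension `dim F - k`
is disjoint from `E`. -/
noncomputable def critNumRes {n : ℕ} (E : Set (Fin n → ZMod 2))
    (F : Submodule (ZMod 2) (Fin n → ZMod 2)) : ℕ :=
  sInf {k : ℕ | ∃ W : Submodule (ZMod 2) (Fin n → ZMod 2), W ≤ F ∧
    Module.finrank (ZMod 2) W = Module.finrank (ZMod 2) F - k ∧
    Disjoint ((W : Set (Fin n → ZMod 2)) \ {0}) E}

/-- The critical number `χ(M)`: the least `k ≥ 0` such that some flat of dimension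
`n - k` is disjoint from `E`. -/
noncomputable def critNum (M : BinMatroid) : ℕ :=
  sInf {k : ℕ | ∃ W : Submodule (ZMod 2) (Fin M.dim → ZMod 2),
    Module.finrank (ZMod 2) W = M.dim - k ∧
    Disjoint ((W : Set (Fin M.dim → ZMod 2)) \ {0}) M.E}

/-- `M ∈ ℰ_k` : every induced restriction of `M` to a flat of dimension at least `k`
has even size. -/
def MemE (k : ℕ) (M : BinMatroid) : Prop :=
  ∀ W : Submodule (ZMod 2) (Fin M.dim → ZMod 2),
    k ≤ Module.finrank (ZMod 2) W →
    Even (M.E ∩ ((W : Set (Fin M.dim → ZMod 2)) \ {0})).ncard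

/-- `M` is full-rank: `E` spans `𝔽₂ⁿ`. -/
def FullRank (M : BinMatroid) : Prop :=
  Submodule.span (ZMod 2) M.E = ⊤

/-- `M` is (isomorphic to) the doubling of `M₀`: `M₀` is identified, via an injective
linear map `φ`, with the restriction of `M` to a hyperplane `H = range φ`, there is
`w ∈ G − (E ∪ H)`, and `E = (E ∩ H) ∪ (w + (E ∩ H))`. -/
def IsDoublingOf (M M₀ : BinMatroid) : Prop :=
  M.dim = M₀.dim + 1 ∧
  ∃ φ : (Fin M₀.dim → ZMod 2) →ₗ[ZMod 2] (Fin M.dim → ZMod 2),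
    Function.Injective φ ∧
    ∃ w : Fin M.dim → ZMod 2, w ≠ 0 ∧ w ∉ Set.range φ ∧ w ∉ M.E ∧
      M.E = φ '' M₀.E ∪ (fun x => w + x) '' (φ '' M₀.E)

/-- `M` arises from `M₀` by a (possibly empty) sequence of doublings. -/
def ArisesByDoublings (M M₀ : BinMatroid) : Prop :=
  ∃ M' : BinMatroid,
    Relation.ReflTransGen (fun A B => IsDoublingOf B A) M₀ M' ∧ M.Iso M'

/-- `M` is (a copy of) `AG°(t−1, 2)`, the matroid `((G − H) ∪ {x}, G)` with `H` a
hyperplane of `G` and `x ∈ H`, where `t = M.dim`. -/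
def IsAGo (M : BinMatroid) : Prop :=
  ∃ H : Submodule (ZMod 2) (Fin M.dim → ZMod 2),
    Module.finrank (ZMod 2) H + 1 = M.dim ∧
    ∃ x ∈ (H : Set (Fin M.dim → ZMod 2)) \ {0},
      M.E = ({v | v ≠ 0} \ (H : Set (Fin M.dim → ZMod 2))) ∪ {x}

/-- `M` is a Bose–Burton geometry of order `k`: `E = G − F` for a flat `F` of
dimension `n − k`. -/
def IsBoseBurton (M : BinMatroid) (k : ℕ) : Prop :=
  k ≤ M.dim ∧ ∃ W : Submodule (ZMod 2) (Fin M.dim → ZMod 2),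
    Module.finrank (ZMod 2) W = M.dim - k ∧
    M.E = {v | v ≠ 0} \ (W : Set (Fin M.dim → ZMod 2))

/-- The ground set `E` (of a matroid of the ambient dimension `n`) is the semidoubling
of its restriction to the hyperplane `H₁` with respect to the hyperplane `H₀` of `H₁`:
there is `w ∈ G − (E ∪ H₁)` with `|{x, x+w} ∩ E| ∈ {0, 2}` for every `x ∈ H₀` and
`|{x, x+w} ∩ E| = 1` for every `x ∈ H₁ − H₀`. -/
def IsSemidoublingWrt {n : ℕ} (E : Set (Fin n → ZMod 2))
    (H₁ H₀ : Submodule (ZMod 2) (Fin n → ZMod 2)) : Prop :=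
  H₀ ≤ H₁ ∧ Module.finrank (ZMod 2) H₀ + 1 = Module.finrank (ZMod 2) H₁ ∧
  ∃ w : Fin n → ZMod 2, w ≠ 0 ∧ w ∉ H₁ ∧ w ∉ E ∧
    (∀ x ∈ (H₀ : Set (Fin n → ZMod 2)) \ {0},
      (({x, x + w} : Set (Fin n → ZMod 2)) ∩ E).ncard = 0 ∨
      (({x, x + w} : Set (Fin n → ZMod 2)) ∩ E).ncard = 2) ∧
    (∀ x ∈ (H₁ : Set (Fin n → ZMod 2)) \ (H₀ : Set (Fin n → ZMod 2)),
      (({x, x + w} : Set (Fin n → ZMod 2)) ∩ E).ncard = 1)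

/-- The ground set `E` is a semidoubling of its restriction to the hyperplane `H₁`
(with respect to some hyperplane `H₀` of `H₁`). -/
def IsSemidoublingOfRes {n : ℕ} (E : Set (Fin n → ZMod 2))
    (H₁ : Submodule (ZMod 2) (Fin n → ZMod 2)) : Prop :=
  ∃ H₀ : Submodule (ZMod 2) (Fin n → ZMod 2), IsSemidoublingWrt E H₁ H₀

/-- `M` is (isomorphic to) a semidoubling of `M₀`: `M₀` is identified, via an injective
linear map `φ`, with the restriction of `M` to the hyperplane `range φ`, and `M` is a
semidoubling of that restriction. -/
def IsSemidoublingOf (M M₀ : BinMatroid) : Prop :=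
  M.dim = M₀.dim + 1 ∧
  ∃ φ : (Fin M₀.dim → ZMod 2) →ₗ[ZMod 2] (Fin M.dim → ZMod 2),
    Function.Injective φ ∧
    φ '' M₀.E = M.E ∩ (Set.range φ \ {0}) ∧
    IsSemidoublingOfRes M.E (LinearMap.range φ)

/-- `M` arises from `M₀` by a (possibly empty) sequence of semidoublings. -/
def ArisesBySemidoublings (M M₀ : BinMatroid) : Prop :=
  ∃ M' : BinMatroid,
    Relation.ReflTransGen (fun A B => IsSemidoublingOf B A) M₀ M' ∧ M.Iso M'

end BinMatroid

/-- A triangle of `G`: a set `{x, y, z}` of three distinct nonzero vectors with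
`x + y + z = 0`. -/
def IsTriangle {n : ℕ} (T : Set (Fin n → ZMod 2)) : Prop :=
  ∃ x y z : Fin n → ZMod 2, x ≠ 0 ∧ y ≠ 0 ∧ z ≠ 0 ∧
    x ≠ y ∧ x ≠ z ∧ y ≠ z ∧ x + y + z = 0 ∧ T = {x, y, z}

/-- `I₃`, the claw: the 3-dimensional matroid whose ground set is the three standard
basis vectors of `𝔽₂³`. -/
def I3 : BinMatroid where
  dim := 3
  E := Set.range fun i : Fin 3 => (Pi.single i 1 : Fin 3 → ZMod 2)
  zero_not_mem := by
    rintro ⟨i, hi⟩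
    have := congrFun hi i
    simp [Pi.single_eq_same] at this

/-- `F₇`, the Fano plane: the 3-dimensional matroid whose ground set is all of
`𝔽₂³ \ {0}`. -/
def F7 : BinMatroid where
  dim := 3
  E := {v | v ≠ 0}
  zero_not_mem := by simp

/-- `K₅`: the 4-dimensional matroid whose ground set is the set of vectors of Hamming
weight 1 or 2 in `𝔽₂⁴`. -/
def K5 : BinMatroid where
  dim := 4
  E := {v | hammingNorm v = 1 ∨ hammingNorm v = 2}
  zero_not_mem := by
    intro h
    simp only [Set.mem_setOf_eq, hammingNorm_zero] at h
    omega

namespace Stmt13Aux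

open Module Submodule

variable {V : Type} [AddCommGroup V] [Module (ZMod 2) V]

lemma z2 : ∀ c : ZMod 2, c + c = 0 := by decide

lemma z2cases : ∀ c : ZMod 2, c = 0 ∨ c = 1 := by decide

lemma addself (x : V) : x + x = 0 := by
  have h : (2 : ZMod 2) • x = 0 := by
    have : (2 : ZMod 2) = 0 := by decide
    rw [this, zero_smul]
  rwa [two_smul] at h

/-- quadratic function property -/
def QuadF (f : V → ZMod 2) : Prop :=
  f 0 = 0 ∧ ∀ a b c : V,
    f (a + b + c) + f (a + b) + f (a + c) + f (b + c) + f a + f b + f c = 0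

/-- polar form -/
def Bpol (f : V → ZMod 2) (x y : V) : ZMod 2 := f (x + y) + f x + f y

lemma Bpol_comm (f : V → ZMod 2) (x y : V) : Bpol f x y = Bpol f y x := by
  simp [Bpol, add_comm, add_left_comm]

lemma Bpol_self (f : V → ZMod 2) (hf : QuadF f) (x : V) : Bpol f x x = 0 := by
  simp [Bpol, addself x, hf.1, z2]

lemma Bpol_add_left (f : V → ZMod 2) (hf : QuadF f) (x y v : V) :
    Bpol f (x + y) v = Bpol f x v + Bpol f y v := by
  have h := hf.2 x y v
  simp only [Bpol]
  generalize f (x + y + v) = A at h ⊢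
  generalize f (x + y) = B at h ⊢
  generalize f (x + v) = C at h ⊢
  generalize f (y + v) = D at h ⊢
  generalize f x = X at h ⊢
  generalize f y = Y at h ⊢
  generalize f v = Z at h ⊢
  revert h; revert A B C D X Y Z; decide

lemma Bpol_add_right (f : V → ZMod 2) (hf : QuadF f) (x y v : V) :
    Bpol f v (x + y) = Bpol f v x + Bpol f v y := by
  rw [Bpol_comm, Bpol_add_left f hf, Bpol_comm, Bpol_comm f y v]

lemma f_add (f : V → ZMod 2) (x y : V) : f (x + y) = f x + f y + Bpol f x y := by
  simp only [Bpol]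
  generalize f (x + y) = A
  generalize f x = X
  generalize f y = Y
  revert A X Y; decide

/-- The polar form with one argument fixed, as a linear map. -/
def BpolMap (f : V → ZMod 2) (hf : QuadF f) (v : V) : V →ₗ[ZMod 2] ZMod 2 where
  toFun x := Bpol f x v
  map_add' x y := Bpol_add_left f hf x y v
  map_smul' c x := by
    rcases z2cases c with h | h <;> subst h
    · simp only [zero_smul, RingHom.id_apply, zero_mul]
      simp [Bpol, hf.1, z2]
    · simp only [one_smul, RingHom.id_apply, one_mul]

end Stmt13Aux

namespace Chunk2
open Stmt13Aux Module Submodule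

set_option linter.unusedSectionVars false

variable {V : Type} [AddCommGroup V] [Module (ZMod 2) V]

lemma compl_in [FiniteDimensional (ZMod 2) V] (W : Submodule (ZMod 2) V) (v : V)
    (hv : v ∈ W) (hv0 : v ≠ 0) :
    ∃ U : Submodule (ZMod 2) V, U ≤ W ∧ U ⊓ Submodule.span (ZMod 2) {v} = ⊥ ∧
      U ⊔ Submodule.span (ZMod 2) {v} = W ∧
      finrank (ZMod 2) U + 1 = finrank (ZMod 2) W := by
  set v' : ↥W := ⟨v, hv⟩
  have hv'0 : v' ≠ 0 := by
    intro h; exact hv0 (by simpa [v'] using congrArg (Subtype.val) h)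
  obtain ⟨U', hU'⟩ := Submodule.exists_isCompl (Submodule.span (ZMod 2) {v'})
  refine ⟨U'.map W.subtype, Submodule.map_subtype_le _ _, ?_, ?_, ?_⟩
  · have hspan : Submodule.span (ZMod 2) {v} =
        (Submodule.span (ZMod 2) {v'}).map W.subtype := by
      rw [Submodule.map_span]; simp [v']
    rw [hspan, ← Submodule.map_inf _ (Submodule.injective_subtype W),
      (hU'.symm).inf_eq_bot, Submodule.map_bot]
  · have hspan : Submodule.span (ZMod 2) {v} =
        (Submodule.span (ZMod 2) {v'}).map W.subtype := by
      rw [Submodule.map_span]; simp [v']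
    rw [hspan, ← Submodule.map_sup, hU'.symm.sup_eq_top, Submodule.map_top,
      Submodule.range_subtype]
  · have h1 : finrank (ZMod 2) (U'.map W.subtype) = finrank (ZMod 2) U' :=
      Submodule.finrank_map_subtype_eq W U'
    have h2 := Submodule.finrank_add_eq_of_isCompl hU'.symm
    have h3 : finrank (ZMod 2) (Submodule.span (ZMod 2) {v'}) = 1 :=
      finrank_span_singleton hv'0
    rw [h1]
    omega

lemma exists_zero [FiniteDimensional (ZMod 2) V] (f : V → ZMod 2) (hf : QuadF f)
    (h3 : 3 ≤ finrank (ZMod 2) V) : ∃ v : V, v ≠ 0 ∧ f v = 0 := by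
  by_contra hc
  push_neg at hc
  have hone : ∀ v : V, v ≠ 0 → f v = 1 := by
    intro v hv
    rcases z2cases (f v) with h | h
    · exact absurd h (hc v hv)
    · exact h
  have hb := Module.finBasis (ZMod 2) V
  set i0 : Fin (finrank (ZMod 2) V) := ⟨0, by omega⟩
  set i1 : Fin (finrank (ZMod 2) V) := ⟨1, by omega⟩
  set i2 : Fin (finrank (ZMod 2) V) := ⟨2, by omega⟩
  set a := hb i0
  set b := hb i1
  set c := hb i2
  have key : ∀ s t u : ZMod 2, s • a + t • b + u • c = 0 → s = 0 ∧ t = 0 ∧ u = 0 := by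
    intro s t u h
    have rep : ∀ j : Fin (finrank (ZMod 2) V),
        hb.repr (s • a + t • b + u • c) j =
          s * (hb.repr a j) + t * (hb.repr b j) + u * (hb.repr c j) := by
      intro j
      simp only [map_add, map_smul, Finsupp.coe_add, Finsupp.coe_smul, Pi.add_apply,
        Pi.smul_apply, smul_eq_mul]
    have h0 := rep i0
    have h1 := rep i1
    have h2 := rep i2
    rw [h] at h0 h1 h2
    simp only [map_zero, Finsupp.coe_zero, Pi.zero_apply] at h0 h1 h2
    have e00 : hb.repr a i0 = 1 := by simp [a, Basis.repr_self]
    have e01 : hb.repr a i1 = 0 := by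
      simp [a, Basis.repr_self, Finsupp.single_apply, i0, i1, Fin.ext_iff]
    have e02 : hb.repr a i2 = 0 := by
      simp [a, Basis.repr_self, Finsupp.single_apply, i0, i2, Fin.ext_iff]
    have e10 : hb.repr b i0 = 0 := by
      simp [b, Basis.repr_self, Finsupp.single_apply, i0, i1, Fin.ext_iff]
    have e11 : hb.repr b i1 = 1 := by simp [b, Basis.repr_self]
    have e12 : hb.repr b i2 = 0 := by
      simp [b, Basis.repr_self, Finsupp.single_apply, i1, i2, Fin.ext_iff]
    have e20 : hb.repr c i0 = 0 := by
      simp [c, Basis.repr_self, Finsupp.single_apply, i0, i2, Fin.ext_iff]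
    have e21 : hb.repr c i1 = 0 := by
      simp [c, Basis.repr_self, Finsupp.single_apply, i1, i2, Fin.ext_iff]
    have e22 : hb.repr c i2 = 1 := by simp [c, Basis.repr_self]
    simp only [e00, e01, e02, e10, e11, e12, e20, e21, e22] at h0 h1 h2
    constructor
    · linear_combination -h0
    constructor
    · linear_combination -h1
    · linear_combination -h2
  have nz : ∀ s t u : ZMod 2, ¬(s = 0 ∧ t = 0 ∧ u = 0) → s • a + t • b + u • c ≠ 0 :=
    fun s t u h hh => h (key s t u hh)
  have ha : a ≠ 0 := by
    have := nz 1 0 0 (by decide); simpa using this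
  have hbb : b ≠ 0 := by
    have := nz 0 1 0 (by decide); simpa using this
  have hcc : c ≠ 0 := by
    have := nz 0 0 1 (by decide); simpa using this
  have hab : a + b ≠ 0 := by
    have := nz 1 1 0 (by decide); simpa using this
  have hac : a + c ≠ 0 := by
    have := nz 1 0 1 (by decide); simpa using this
  have hbc : b + c ≠ 0 := by
    have := nz 0 1 1 (by decide); simpa using this
  have habc : a + b + c ≠ 0 := by
    have := nz 1 1 1 (by decide); simpa using this
  have hid := hf.2 a b c
  rw [hone _ habc, hone _ hab, hone _ hac, hone _ hbc, hone _ ha, hone _ hbb,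
    hone _ hcc] at hid
  exact absurd hid (by decide)

end Chunk2

namespace Chunk3
open Stmt13Aux Chunk2 Module Submodule

set_option linter.unusedSectionVars false

lemma main_lemma : ∀ n : ℕ, ∀ (V : Type) (_ : AddCommGroup V),
    ∀ (_ : Module (ZMod 2) V) (_ : FiniteDimensional (ZMod 2) V),
    finrank (ZMod 2) V = n → ∀ f : V → ZMod 2, QuadF f →
    ∃ W : Submodule (ZMod 2) V, (∀ x ∈ W, f x = 0) ∧
      n ≤ 2 * finrank (ZMod 2) W + 2 := by
  intro n
  induction n using Nat.strong_induction_on with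
  | _ n IH =>
    intro V _ _ _ hn f hf
    by_cases h3 : n ≤ 2
    · exact ⟨⊥, fun x hx => by rw [Submodule.mem_bot] at hx; rw [hx, hf.1], by omega⟩
    · push_neg at h3
      obtain ⟨v, hv0, hfv⟩ := exists_zero f hf (by omega)
      set β := BpolMap f hf v with hβ
      set K := LinearMap.ker β with hK
      have hvK : v ∈ K := by
        rw [hK, LinearMap.mem_ker]
        show Bpol f v v = 0
        exact Bpol_self f hf v
      have hKrank : finrank (ZMod 2) V ≤ finrank (ZMod 2) K + 1 := by
        have h1 := LinearMap.finrank_range_add_finrank_ker β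
        rw [← hK] at h1
        have h2 : finrank (ZMod 2) (LinearMap.range β) ≤ 1 := by
          simpa using Submodule.finrank_le (LinearMap.range β)
        omega
      obtain ⟨U, hUK, hdisj, hsup, hrank⟩ := compl_in K v hvK hv0
      have hUquad : QuadF (fun x : ↥U => f ↑x) := by
        constructor
        · show f ((0 : ↥U) : V) = 0
          rw [Submodule.coe_zero, hf.1]
        · intro a b c
          have := hf.2 (a : V) (b : V) (c : V)
          simpa using this
      have hUlt : finrank (ZMod 2) ↥U < n := by
        have hKle : finrank (ZMod 2) K ≤ n := hn ▸ Submodule.finrank_le K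
        omega
      obtain ⟨W', hW'0, hW'r⟩ := IH (finrank (ZMod 2) ↥U) hUlt ↥U inferInstance
        inferInstance inferInstance rfl _ hUquad
      set A := W'.map U.subtype with hA
      have hAU : A ≤ U := Submodule.map_subtype_le _ _
      have hA0 : ∀ x ∈ A, f x = 0 := by
        rintro x ⟨y, hy, rfl⟩
        exact hW'0 y hy
      refine ⟨A ⊔ Submodule.span (ZMod 2) {v}, ?_, ?_⟩
      · intro x hx
        rw [Submodule.mem_sup] at hx
        obtain ⟨y, hy, z, hz, rfl⟩ := hx
        rw [Submodule.mem_span_singleton] at hz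
        obtain ⟨cc, rfl⟩ := hz
        rcases z2cases cc with h | h <;> subst h
        · rw [zero_smul, add_zero]; exact hA0 y hy
        · rw [one_smul, f_add f y v, hA0 y hy, hfv]
          have : Bpol f y v = 0 := hUK (hAU hy)
          rw [this]; simp
      · have hAr : finrank (ZMod 2) A = finrank (ZMod 2) W' :=
          Submodule.finrank_map_subtype_eq U W'
        have hinf : A ⊓ Submodule.span (ZMod 2) {v} = ⊥ := by
          rw [← le_bot_iff, ← hdisj]
          exact inf_le_inf_right _ hAU
        have hsupr := Submodule.finrank_sup_add_finrank_inf_eq A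
          (Submodule.span (ZMod 2) {v})
        rw [hinf, finrank_bot, finrank_span_singleton hv0] at hsupr
        omega

end Chunk3

namespace Chunk4
open Stmt13Aux Chunk2 Chunk3 Module Submodule

set_option linter.unusedSectionVars false

variable {V : Type} [AddCommGroup V] [Module (ZMod 2) V]

lemma zsum {M : Type} [AddCommMonoid M] (h : ZMod 2 → M) : ∑ s, h s = h 0 + h 1 := by
  have huniv : (Finset.univ : Finset (ZMod 2)) = {0, 1} := by decide
  rw [huniv, Finset.sum_insert (by decide), Finset.sum_singleton]

/-- linear combination map -/
def trip (a b c : V) : (ZMod 2 × ZMod 2 × ZMod 2) →ₗ[ZMod 2] V where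
  toFun p := p.1 • a + p.2.1 • b + p.2.2 • c
  map_add' p q := by
    simp only [Prod.fst_add, Prod.snd_add, add_smul]
    abel
  map_smul' r p := by
    simp only [Prod.smul_fst, Prod.smul_snd, smul_eq_mul, mul_smul, RingHom.id_apply,
      smul_add]

@[simp] lemma trip_apply (a b c : V) (p : ZMod 2 × ZMod 2 × ZMod 2) :
    trip a b c p = p.1 • a + p.2.1 • b + p.2.2 • c := rfl

lemma trip_sum (f : V → ZMod 2) (hf0 : f 0 = 0) (a b c : V) :
    ∑ p : ZMod 2 × ZMod 2 × ZMod 2, f (trip a b c p) =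
      f (a + b + c) + f (a + b) + f (a + c) + f (b + c) + f a + f b + f c := by
  rw [Fintype.sum_prod_type]
  rw [zsum (fun s => ∑ q : ZMod 2 × ZMod 2, f (trip a b c (s, q)))]
  rw [Fintype.sum_prod_type, Fintype.sum_prod_type]
  rw [zsum (fun t => ∑ u : ZMod 2, f (trip a b c (0, t, u))),
    zsum (fun t => ∑ u : ZMod 2, f (trip a b c (1, t, u))),
    zsum (fun u => f (trip a b c (0, 0, u))), zsum (fun u => f (trip a b c (0, 1, u))),
    zsum (fun u => f (trip a b c (1, 0, u))), zsum (fun u => f (trip a b c (1, 1, u)))]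
  simp only [trip_apply, zero_smul, one_smul, add_zero, zero_add, hf0]
  abel

lemma sum_zero_of_noninj (f : V → ZMod 2)
    (g : (ZMod 2 × ZMod 2 × ZMod 2) →ₗ[ZMod 2] V) (hg : ¬ Function.Injective g) :
    ∑ p : ZMod 2 × ZMod 2 × ZMod 2, f (g p) = 0 := by
  have hker : LinearMap.ker g ≠ ⊥ := fun h => hg (LinearMap.ker_eq_bot.mp h)
  obtain ⟨k, hk, hk0⟩ := Submodule.exists_mem_ne_zero_of_ne_bot hker
  refine Finset.sum_involution (fun p _ => p + k) ?_ ?_ ?_ ?_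
  · intro p _
    rw [LinearMap.mem_ker] at hk
    rw [map_add, hk, add_zero, z2]
  · intro p _ _
    intro h
    exact hk0 (add_eq_left.mp h)
  · intro p _; exact Finset.mem_univ _
  · intro p _
    show p + k + k = p
    rw [add_assoc, addself, add_zero]

lemma sum_range_of_inj (f : V → ZMod 2)
    (g : (ZMod 2 × ZMod 2 × ZMod 2) →ₗ[ZMod 2] V) (hg : Function.Injective g)
    [Fintype V] [DecidableEq V] :
    ∑ p : ZMod 2 × ZMod 2 × ZMod 2, f (g p) =
      ∑ x ∈ (LinearMap.range g : Set V).toFinite.toFinset, f x := by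
  have himg : (LinearMap.range g : Set V).toFinite.toFinset =
      Finset.univ.image g := by
    ext x
    simp [Set.Finite.mem_toFinset, LinearMap.mem_range, Finset.mem_image, eq_comm]
  rw [himg, Finset.sum_image (fun x _ y _ h => hg h)]

lemma finrank_range_trip (g : (ZMod 2 × ZMod 2 × ZMod 2) →ₗ[ZMod 2] V)
    (hg : Function.Injective g) : finrank (ZMod 2) (LinearMap.range g) = 3 := by
  have h1 := LinearMap.finrank_range_add_finrank_ker g
  rw [LinearMap.ker_eq_bot.mpr hg, finrank_bot] at h1
  have h2 : finrank (ZMod 2) (ZMod 2 × ZMod 2 × ZMod 2) = 3 := by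
    rw [Module.finrank_prod, Module.finrank_prod, Module.finrank_self]
  omega

lemma even_bridge [Fintype V] [DecidableEq V] (E : Set V) (h0 : (0 : V) ∉ E)
    (f : V → ZMod 2) (hf1 : ∀ x ∈ E, f x = 1) (hf2 : ∀ x, x ∉ E → f x = 0)
    (W : Submodule (ZMod 2) V) :
    Even ((E ∩ ((W : Set V) \ {0})).ncard) ↔
      ∑ x ∈ (W : Set V).toFinite.toFinset, f x = 0 := by
  classical
  have hsum : ∑ x ∈ (W : Set V).toFinite.toFinset, f x =
      ∑ x ∈ (W : Set V).toFinite.toFinset, (if x ∈ E then (1 : ZMod 2) else 0) := by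
    refine Finset.sum_congr rfl fun x _ => ?_
    by_cases hx : x ∈ E
    · rw [if_pos hx]; exact hf1 x hx
    · rw [if_neg hx]; exact hf2 x hx
  have hset : E ∩ ((W : Set V) \ {0}) =
      ↑(((W : Set V).toFinite.toFinset).filter (· ∈ E)) := by
    ext x
    simp only [Set.mem_inter_iff, Set.mem_diff, Set.mem_singleton_iff, Finset.coe_filter,
      Set.mem_setOf_eq, Set.Finite.mem_toFinset, SetLike.mem_coe]
    constructor
    · rintro ⟨h1, h2, _⟩; exact ⟨h2, h1⟩
    · rintro ⟨h1, h2⟩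
      exact ⟨h2, h1, fun hx => h0 (hx ▸ h2)⟩
  rw [hsum, hset, Set.ncard_coe_finset, Finset.sum_boole]
  rw [ZMod.natCast_eq_zero_iff]
  exact even_iff_two_dvd

lemma memE_quadF [Fintype V] [DecidableEq V] (E : Set V) (h0 : (0 : V) ∉ E)
    (f : V → ZMod 2) (hf1 : ∀ x ∈ E, f x = 1) (hf2 : ∀ x, x ∉ E → f x = 0)
    (hM : ∀ W : Submodule (ZMod 2) V, 3 ≤ finrank (ZMod 2) W →
      Even ((E ∩ ((W : Set V) \ {0})).ncard)) :
    QuadF f := by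
  have hf0 : f 0 = 0 := hf2 0 h0
  refine ⟨hf0, ?_⟩
  intro a b c
  rw [← trip_sum _ hf0 a b c]
  by_cases hg : Function.Injective (trip a b c)
  · rw [sum_range_of_inj _ _ hg]
    rw [← even_bridge E h0 f hf1 hf2]
    exact hM _ (by rw [finrank_range_trip _ hg])
  · exact sum_zero_of_noninj _ _ hg

end Chunk4

namespace Chunk5
open Stmt13Aux Chunk2 Chunk3 Chunk4 Module Submodule

set_option linter.unusedSectionVars false

variable {V : Type} [AddCommGroup V] [Module (ZMod 2) V]

/-- helper: map of kernel of a composition with subtype -/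
lemma map_ker_comp {M2 : Type} [AddCommGroup M2] [Module (ZMod 2) M2]
    (U : Submodule (ZMod 2) V) (g : V →ₗ[ZMod 2] M2) :
    Submodule.map U.subtype (LinearMap.ker (g.comp U.subtype)) =
      U ⊓ LinearMap.ker g := by
  ext x
  simp only [Submodule.mem_map, LinearMap.mem_ker, LinearMap.comp_apply,
    Submodule.mem_inf]
  constructor
  · rintro ⟨⟨y, hy⟩, hk, rfl⟩
    exact ⟨hy, hk⟩
  · rintro ⟨hx, hk⟩
    exact ⟨⟨x, hx⟩, hk, rfl⟩

lemma finrank_inf_ker_aux {M2 : Type} [AddCommGroup M2] [Module (ZMod 2) M2]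
    [FiniteDimensional (ZMod 2) V] (U : Submodule (ZMod 2) V) (g : V →ₗ[ZMod 2] M2) :
    finrank (ZMod 2) (U ⊓ LinearMap.ker g : Submodule (ZMod 2) V) =
      finrank (ZMod 2) (LinearMap.ker (g.comp U.subtype)) := by
  rw [← map_ker_comp, Submodule.finrank_map_subtype_eq]

lemma finrank_inf_ker [FiniteDimensional (ZMod 2) V] (U : Submodule (ZMod 2) V)
    (γ : V →ₗ[ZMod 2] ZMod 2) :
    finrank (ZMod 2) U ≤
      finrank (ZMod 2) (U ⊓ LinearMap.ker γ : Submodule (ZMod 2) V) + 1 := by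
  have h1 := LinearMap.finrank_range_add_finrank_ker (γ.comp U.subtype)
  have h2 : finrank (ZMod 2) (LinearMap.range (γ.comp U.subtype)) ≤ 1 := by
    simpa using Submodule.finrank_le (LinearMap.range (γ.comp U.subtype))
  rw [← finrank_inf_ker_aux] at h1
  omega

/-- polar form pairing property -/
def PolarEq (f : V → ZMod 2) (B : V → V → ZMod 2) : Prop :=
  ∀ x y, f (x + y) = f x + f y + B x y

lemma polarEq_add {f g : V → ZMod 2} {B C : V → V → ZMod 2}
    (hf : PolarEq f B) (hg : PolarEq g C) :
    PolarEq (fun x => f x + g x) (fun x y => B x y + C x y) := by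
  intro x y
  dsimp only
  rw [hf x y, hg x y]
  abel

lemma polarEq_sum {ι : Type} [DecidableEq ι] (s : Finset ι) (F : ι → V → ZMod 2)
    (B : ι → V → V → ZMod 2) (h : ∀ i ∈ s, PolarEq (F i) (B i)) :
    PolarEq (fun x => ∑ i ∈ s, F i x) (fun x y => ∑ i ∈ s, B i x y) := by
  induction s using Finset.induction_on with
  | empty => intro x y; simp
  | @insert a s hni ih =>
    have h1 : PolarEq (fun x => F a x + ∑ i ∈ s, F i x)
        (fun x y => B a x y + ∑ i ∈ s, B i x y) :=
      polarEq_add (h a (Finset.mem_insert_self a s))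
        (ih (fun i hi => h i (Finset.mem_insert_of_mem hi)))
    intro x y
    dsimp only
    rw [Finset.sum_insert hni, Finset.sum_insert hni, Finset.sum_insert hni,
      Finset.sum_insert hni]
    simpa using h1 x y

lemma polarEq_mul (A B : V → ZMod 2) (hA : ∀ x y, A (x + y) = A x + A y)
    (hB : ∀ x y, B (x + y) = B x + B y) :
    PolarEq (fun x => A x * B x) (fun x y => A x * B y + A y * B x) := by
  intro x y
  dsimp only
  rw [hA, hB]
  generalize A x = a; generalize A y = b; generalize B x = c; generalize B y = d
  revert a b c d; decide

lemma polarEq_lin (A : V → ZMod 2) (hA : ∀ x y, A (x + y) = A x + A y) :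
    PolarEq A (fun _ _ => 0) := by
  intro x y; rw [hA, add_zero]

lemma polarEq_zero : PolarEq (fun _ : V => (0 : ZMod 2)) (fun _ _ => 0) := by
  intro x y; simp

lemma Bpol_eq_of_polarEq {f : V → ZMod 2} {B : V → V → ZMod 2} (hq : PolarEq f B) :
    ∀ x y, Bpol f x y = B x y := by
  intro x y
  rw [Bpol, hq x y]
  generalize f x = a; generalize f y = b; generalize B x y = c
  revert a b c; decide

lemma quadF_of_polarEq {f : V → ZMod 2} {B : V → V → ZMod 2} (hq : PolarEq f B)
    (hf0 : f 0 = 0)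
    (hBl : ∀ x y z, B (x + y) z = B x z + B y z) : QuadF f := by
  refine ⟨hf0, ?_⟩
  intro a b c
  rw [hq (a + b) c, hq a b, hq a c, hq b c, hBl a b c]
  generalize f a = fa; generalize f b = fb; generalize f c = fc
  generalize B a b = bab; generalize B a c = bac; generalize B b c = bbc
  revert fa fb fc bab bac bbc; decide

end Chunk5

namespace Chunk6
open Stmt13Aux Chunk2 Chunk3 Chunk4 Chunk5 Module Submodule

set_option linter.unusedSectionVars false

variable {V : Type} [AddCommGroup V] [Module (ZMod 2) V]

lemma strip' [FiniteDimensional (ZMod 2) V] (f : V → ZMod 2) (hf : QuadF f)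
    (S : Submodule (ZMod 2) V) (a b : V) (ha : a ∈ S) (hb : b ∈ S)
    (hfa : f a = 0) (hfb : f b = 0) (hab : Bpol f a b = 1)
    (α β : V →ₗ[ZMod 2] ZMod 2)
    (hα : ∀ x, α x = Bpol f x b) (hβ : ∀ x, β x = Bpol f x a)
    (s : ℕ)
    (hrec : ∀ T : Submodule (ZMod 2) V,
      T ≤ S ⊓ LinearMap.ker α ⊓ LinearMap.ker β → (∀ x ∈ T, f x = 0) →
      finrank (ZMod 2) T ≤ s) :
    ∀ W : Submodule (ZMod 2) V, W ≤ S → (∀ x ∈ W, f x = 0) →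
      finrank (ZMod 2) W ≤ s + 1 := by
  intro W hWS hW0
  have hWiso : ∀ x ∈ W, ∀ y ∈ W, Bpol f x y = 0 := by
    intro x hx y hy
    rw [Bpol, hW0 _ (Submodule.add_mem W hx hy), hW0 _ hx, hW0 _ hy]
    simp
  set ψ := (α.prod β).comp W.subtype with hψdef
  have hker : LinearMap.ker (α.prod β) = LinearMap.ker α ⊓ LinearMap.ker β :=
    LinearMap.ker_prod α β
  have hkerrank : finrank (ZMod 2) (LinearMap.ker ψ) =
      finrank (ZMod 2) (W ⊓ (LinearMap.ker α ⊓ LinearMap.ker β) : Submodule (ZMod 2) V) := by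
    rw [← hker, finrank_inf_ker_aux]
  set W₀ := W ⊓ (LinearMap.ker α ⊓ LinearMap.ker β) with hW₀def
  have hW₀W : W₀ ≤ W := inf_le_left
  have hW₀C : W₀ ≤ S ⊓ LinearMap.ker α ⊓ LinearMap.ker β := by
    intro x hx
    exact ⟨⟨hWS hx.1, hx.2.1⟩, hx.2.2⟩
  have hW₀0 : ∀ x ∈ W₀, f x = 0 := fun x hx => hW0 x hx.1
  have hrn := LinearMap.finrank_range_add_finrank_ker ψ
  rw [hkerrank] at hrn
  have hfrV : finrank (ZMod 2) W = finrank (ZMod 2) ↥W := rfl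
  by_cases htop : LinearMap.range ψ = ⊤
  · -- surjective case
    have hmem : ∀ st : ZMod 2 × ZMod 2, ∃ w ∈ W, α w = st.1 ∧ β w = st.2 := by
      intro st
      have : st ∈ LinearMap.range ψ := htop ▸ Submodule.mem_top
      obtain ⟨w', hw'⟩ := this
      refine ⟨(w' : V), w'.2, ?_, ?_⟩
      · have := congrArg Prod.fst hw'; exact this
      · have := congrArg Prod.snd hw'; exact this
    obtain ⟨w1, hw1W, hw1α, hw1β⟩ := hmem (1, 0)
    obtain ⟨w2, hw2W, hw2α, hw2β⟩ := hmem (0, 1)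
    set u1 := w1 + a with hu1def
    have hfu1 : f u1 = 0 := by
      rw [hu1def, f_add f w1 a, hW0 _ hw1W, hfa, ← hβ w1, hw1β]
      simp
    have hu1α : α u1 = 0 := by
      rw [hu1def, map_add, hw1α, hα a, hab]
      decide
    have hu1β : β u1 = 0 := by
      rw [hu1def, map_add, hw1β, hβ a, Bpol_self f hf a]
      simp
    have hu1S : u1 ∈ S := Submodule.add_mem S (hWS hw1W) ha
    have hu1W₀ : u1 ∉ W₀ := by
      intro h
      have haW : a ∈ W := by
        have h2 : u1 + w1 = a := by
          rw [hu1def, add_comm w1 a, add_assoc, addself, add_zero]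
        rw [← h2]
        exact Submodule.add_mem W (hW₀W h) hw1W
      have := hWiso w2 hw2W a haW
      rw [← hβ w2, hw2β] at this
      exact one_ne_zero this
    have hu10 : u1 ≠ 0 := fun h => hu1W₀ (h ▸ Submodule.zero_mem W₀)
    set T := W₀ ⊔ Submodule.span (ZMod 2) {u1} with hTdef
    have hTC : T ≤ S ⊓ LinearMap.ker α ⊓ LinearMap.ker β := by
      rw [hTdef]
      refine sup_le hW₀C ?_
      rw [Submodule.span_le, Set.singleton_subset_iff]
      exact ⟨⟨hu1S, hu1α⟩, hu1β⟩
    have hT0 : ∀ x ∈ T, f x = 0 := by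
      intro x hx
      rw [hTdef, Submodule.mem_sup] at hx
      obtain ⟨y, hy, z, hz, rfl⟩ := hx
      rw [Submodule.mem_span_singleton] at hz
      obtain ⟨cc, rfl⟩ := hz
      rcases z2cases cc with h | h <;> subst h
      · rw [zero_smul, add_zero]; exact hW₀0 y hy
      · rw [one_smul, f_add f y u1, hW₀0 y hy, hfu1]
        have hbp : Bpol f y u1 = 0 := by
          rw [hu1def, Bpol_add_right f hf w1 a y, hWiso y (hW₀W hy) w1 hw1W,
            ← hβ y, hy.2.2, add_zero]
        rw [hbp]; simp
    have hdisj : W₀ ⊓ Submodule.span (ZMod 2) {u1} = ⊥ := by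
      rw [eq_bot_iff]
      intro x hx
      obtain ⟨hx1, hx2⟩ := Submodule.mem_inf.mp hx
      rw [Submodule.mem_span_singleton] at hx2
      obtain ⟨cc, rfl⟩ := hx2
      rcases z2cases cc with h | h <;> subst h
      · rw [zero_smul]; exact Submodule.zero_mem ⊥
      · rw [one_smul] at hx1 ⊢
        exact absurd hx1 hu1W₀
    have hTrank : finrank (ZMod 2) T = finrank (ZMod 2) W₀ + 1 := by
      have := Submodule.finrank_sup_add_finrank_inf_eq W₀
        (Submodule.span (ZMod 2) {u1})
      rw [hdisj, finrank_bot, finrank_span_singleton hu10, ← hTdef] at this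
      omega
    have hTs := hrec T hTC hT0
    have hrange : finrank (ZMod 2) (LinearMap.range ψ) = 2 := by
      rw [htop]
      rw [finrank_top]
      rw [Module.finrank_prod, Module.finrank_self]
    omega
  · have hrange : finrank (ZMod 2) (LinearMap.range ψ) ≤ 1 := by
      have h2 : finrank (ZMod 2) (ZMod 2 × ZMod 2) = 2 := by
        rw [Module.finrank_prod, Module.finrank_self]
      have := Submodule.finrank_lt (V := ZMod 2 × ZMod 2)
        htop
      omega
    have hW₀s := hrec W₀ hW₀C hW₀0
    omega

end Chunk6

namespace Chunk7
open Stmt13Aux Chunk2 Chunk3 Chunk4 Chunk5 Chunk6 Module Submodule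

set_option linter.unusedSectionVars false

variable {V : Type} [AddCommGroup V] [Module (ZMod 2) V]

lemma sum_quad_subspace [Fintype V] [DecidableEq V] [FiniteDimensional (ZMod 2) V]
    (f : V → ZMod 2) (hf : QuadF f)
    (W : Submodule (ZMod 2) V) (h3 : 3 ≤ finrank (ZMod 2) W) :
    ∑ x ∈ (W : Set V).toFinite.toFinset, f x = 0 := by
  classical
  have hWquad : QuadF (fun x : ↥W => f ↑x) := by
    constructor
    · show f ((0 : ↥W) : V) = 0
      rw [Submodule.coe_zero, hf.1]
    · intro a b c
      have := hf.2 (a : V) (b : V) (c : V)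
      simpa using this
  obtain ⟨v', hv'0, hfv⟩ := exists_zero (V := ↥W) (fun x => f ↑x) hWquad h3
  set v : V := (v' : V) with hvdef
  have hvW : v ∈ W := v'.2
  have hv0 : v ≠ 0 := fun h => hv'0 (Subtype.ext h)
  obtain ⟨U, hUW, hdisj, hsup, hrank⟩ := compl_in W v hvW hv0
  have hvU : v ∉ U := by
    intro h
    have : v ∈ U ⊓ Submodule.span (ZMod 2) {v} :=
      ⟨h, Submodule.mem_span_singleton_self v⟩
    rw [hdisj] at this
    exact hv0 this
  set A := (U : Set V).toFinite.toFinset with hA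
  set T := (W : Set V).toFinite.toFinset with hT
  have hmemA : ∀ x, x ∈ A ↔ x ∈ U := by
    intro x; rw [hA, Set.Finite.mem_toFinset, SetLike.mem_coe]
  have hmemT : ∀ x, x ∈ T ↔ x ∈ W := by
    intro x; rw [hT, Set.Finite.mem_toFinset, SetLike.mem_coe]
  have hTeq : T = A ∪ A.image (· + v) := by
    ext x
    rw [Finset.mem_union, Finset.mem_image, hmemT]
    constructor
    · intro hx
      rw [← hsup, Submodule.mem_sup] at hx
      obtain ⟨y, hy, z, hz, rfl⟩ := hx
      rw [Submodule.mem_span_singleton] at hz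
      obtain ⟨cc, rfl⟩ := hz
      rcases z2cases cc with h | h <;> subst h
      · left; rw [zero_smul, add_zero, hmemA]; exact hy
      · right; exact ⟨y, (hmemA y).mpr hy, by rw [one_smul]⟩
    · intro hx
      rcases hx with hx | ⟨u, hu, rfl⟩
      · exact hUW ((hmemA x).mp hx)
      · exact Submodule.add_mem W (hUW ((hmemA u).mp hu)) hvW
  have hdisjA : Disjoint A (A.image (· + v)) := by
    rw [Finset.disjoint_left]
    rintro x hx hx'
    rw [Finset.mem_image] at hx'
    obtain ⟨u, hu, rfl⟩ := hx'
    apply hvU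
    have h2 : v = (u + v) + u := by
      rw [add_comm u v, add_assoc, addself, add_zero]
    rw [h2]
    exact Submodule.add_mem U ((hmemA _).mp hx) ((hmemA u).mp hu)
  rw [hTeq, Finset.sum_union hdisjA,
    Finset.sum_image (fun x _ y _ h => by simpa using congrArg (· + (-v)) h)]
  rw [← Finset.sum_add_distrib]
  have hterm : ∀ u : V, f u + f (u + v) = Bpol f u v := by
    intro u
    rw [f_add f u v, hfv]
    generalize f u = A1; generalize Bpol f u v = A2
    revert A1 A2; decide
  rw [Finset.sum_congr rfl (fun u _ => hterm u)]
  -- now sum of linear functional over A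
  set βm := BpolMap f hf v with hβm
  have hU2 : 2 ≤ finrank (ZMod 2) U := by omega
  have hK1 : 1 ≤ finrank (ZMod 2) (U ⊓ LinearMap.ker βm : Submodule (ZMod 2) V) := by
    have := finrank_inf_ker U βm
    omega
  have hKne : (U ⊓ LinearMap.ker βm : Submodule (ZMod 2) V) ≠ ⊥ := by
    intro h
    rw [h, finrank_bot] at hK1
    omega
  obtain ⟨w, hw, hw0⟩ := Submodule.exists_mem_ne_zero_of_ne_bot hKne
  obtain ⟨hwU, hwker⟩ := Submodule.mem_inf.mp hw
  have hwB : Bpol f w v = 0 := hwker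
  refine Finset.sum_involution (fun u _ => u + w) ?_ ?_ ?_ ?_
  · intro u _
    rw [Bpol_add_left f hf u w v, hwB, add_zero, z2]
  · intro u _ _ h
    exact hw0 (add_eq_left.mp h)
  · intro u hu
    rw [hmemA] at hu ⊢
    exact Submodule.add_mem U hu hwU
  · intro u _
    show u + w + w = u
    rw [add_assoc, addself, add_zero]

end Chunk7

namespace Chunk8
open Stmt13Aux Chunk2 Chunk3 Chunk4 Chunk5 Chunk6 Chunk7 Module Submodule

set_option linter.unusedSectionVars false

def yc (n : ℕ) (x : Fin n → ZMod 2) (j : ℕ) : ZMod 2 :=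
  if h : j < n then x ⟨j, h⟩ else 0

lemma yc_add (n : ℕ) (x y : Fin n → ZMod 2) (j : ℕ) :
    yc n (x + y) j = yc n x j + yc n y j := by
  unfold yc; split
  · rfl
  · rw [add_zero]

lemma yc_smul (n : ℕ) (c : ZMod 2) (x : Fin n → ZMod 2) (j : ℕ) :
    yc n (c • x) j = c * yc n x j := by
  unfold yc; split
  · rfl
  · rw [mul_zero]

lemma yc_zero (n j : ℕ) : yc n (0 : Fin n → ZMod 2) j = 0 := by
  unfold yc; split <;> rfl

def ycL (n j : ℕ) : (Fin n → ZMod 2) →ₗ[ZMod 2] ZMod 2 where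
  toFun x := yc n x j
  map_add' x y := yc_add n x y j
  map_smul' c x := yc_smul n c x j

@[simp] lemma ycL_apply (n j : ℕ) (x : Fin n → ZMod 2) : ycL n j x = yc n x j := rfl

def ec (n k : ℕ) : Fin n → ZMod 2 := fun i => if (i : ℕ) = k then 1 else 0

lemma yc_ec (n k : ℕ) (hk : k < n) (j : ℕ) :
    yc n (ec n k) j = if j = k then 1 else 0 := by
  unfold yc ec
  split
  · rfl
  · rw [if_neg (by omega)]

def Qf (n : ℕ) (x : Fin n → ZMod 2) : ZMod 2 :=
  (∑ i ∈ Finset.range ((n - 1) / 2), yc n x (2 * i) * yc n x (2 * i + 1)) +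
    yc n x (n - 1) +
    (if n % 2 = 0 then yc n x (n - 2) * yc n x (n - 1) + yc n x (n - 2) else 0)

def BQ (n : ℕ) (x y : Fin n → ZMod 2) : ZMod 2 :=
  ((∑ i ∈ Finset.range ((n - 1) / 2),
      (yc n x (2 * i) * yc n y (2 * i + 1) + yc n y (2 * i) * yc n x (2 * i + 1))) + 0) +
    (if n % 2 = 0 then
      yc n x (n - 2) * yc n y (n - 1) + yc n y (n - 2) * yc n x (n - 1) + 0 else 0)

lemma polar_Qf (n : ℕ) : PolarEq (Qf n) (BQ n) := by
  have hS : PolarEq (V := Fin n → ZMod 2)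
      (fun x => ∑ i ∈ Finset.range ((n - 1) / 2), yc n x (2 * i) * yc n x (2 * i + 1))
      (fun x y => ∑ i ∈ Finset.range ((n - 1) / 2),
        (yc n x (2 * i) * yc n y (2 * i + 1) + yc n y (2 * i) * yc n x (2 * i + 1))) :=
    polarEq_sum _ _ _ (fun i _ =>
      polarEq_mul _ _ (fun x y => yc_add n x y _) (fun x y => yc_add n x y _))
  have hL : PolarEq (V := Fin n → ZMod 2) (fun x => yc n x (n - 1)) (fun _ _ => 0) :=
    polarEq_lin _ (fun x y => yc_add n x y _)
  have hT : PolarEq (V := Fin n → ZMod 2)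
      (fun x => if n % 2 = 0 then yc n x (n - 2) * yc n x (n - 1) + yc n x (n - 2) else 0)
      (fun x y => if n % 2 = 0 then
        yc n x (n - 2) * yc n y (n - 1) + yc n y (n - 2) * yc n x (n - 1) + 0 else 0) := by
    by_cases hpar : n % 2 = 0
    · simp only [if_pos hpar]
      exact polarEq_add
        (polarEq_mul _ _ (fun x y => yc_add n x y _) (fun x y => yc_add n x y _))
        (polarEq_lin _ (fun x y => yc_add n x y _))
    · simp only [if_neg hpar]
      exact polarEq_zero
  intro x y
  exact polarEq_add (polarEq_add hS hL) hT x y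

lemma Qf_zero (n : ℕ) : Qf n 0 = 0 := by
  unfold Qf
  simp [yc_zero]

lemma BQ_add_left (n : ℕ) (x y z : Fin n → ZMod 2) :
    BQ n (x + y) z = BQ n x z + BQ n y z := by
  unfold BQ
  simp only [yc_add]
  rw [Finset.sum_congr rfl (fun i _ => (by ring :
    (yc n x (2 * i) + yc n y (2 * i)) * yc n z (2 * i + 1) +
      yc n z (2 * i) * (yc n x (2 * i + 1) + yc n y (2 * i + 1)) =
    (yc n x (2 * i) * yc n z (2 * i + 1) + yc n z (2 * i) * yc n x (2 * i + 1)) +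
      (yc n y (2 * i) * yc n z (2 * i + 1) + yc n z (2 * i) * yc n y (2 * i + 1))))]
  rw [Finset.sum_add_distrib]
  by_cases hpar : n % 2 = 0
  · simp only [if_pos hpar]; ring
  · simp only [if_neg hpar]; ring

lemma quadF_Qf (n : ℕ) : QuadF (Qf n) :=
  quadF_of_polarEq (polar_Qf n) (Qf_zero n) (BQ_add_left n)

lemma Bpol_Qf (n : ℕ) (x y : Fin n → ZMod 2) : Bpol (Qf n) x y = BQ n x y :=
  Bpol_eq_of_polarEq (polar_Qf n) x y

lemma Bpol_Qf_even (n j : ℕ) (hj : j < (n - 1) / 2) (x : Fin n → ZMod 2) :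
    Bpol (Qf n) x (ec n (2 * j)) = yc n x (2 * j + 1) := by
  have hp : 2 * ((n - 1) / 2) ≤ n - 1 := by omega
  have h2j : 2 * j < n := by omega
  rw [Bpol_Qf]
  unfold BQ
  rw [Finset.sum_congr rfl (fun i hi => ?_), Finset.sum_ite_eq' (Finset.range ((n-1)/2)) j
    (fun _ => yc n x (2 * j + 1))]
  rotate_left
  · rw [yc_ec n (2*j) h2j, yc_ec n (2*j) h2j]
    by_cases hij : i = j
    · subst hij
      rw [if_neg (by omega), if_pos rfl, if_pos rfl, mul_zero, one_mul, zero_add]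
    · rw [if_neg (by omega : ¬ 2*i+1 = 2*j), if_neg (by omega : ¬ 2*i = 2*j),
        if_neg hij, mul_zero, zero_mul, add_zero]
  · rw [if_pos (Finset.mem_range.mpr hj), add_zero]
    by_cases hpar : n % 2 = 0
    · rw [if_pos hpar, yc_ec n (2*j) h2j, yc_ec n (2*j) h2j,
        if_neg (by omega : ¬ n - 1 = 2*j), if_neg (by omega : ¬ n - 2 = 2*j),
        mul_zero, zero_mul, zero_add, add_zero, add_zero]
    · rw [if_neg hpar, add_zero]

lemma Bpol_Qf_odd (n j : ℕ) (hj : j < (n - 1) / 2) (x : Fin n → ZMod 2) :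
    Bpol (Qf n) x (ec n (2 * j + 1)) = yc n x (2 * j) := by
  have hp : 2 * ((n - 1) / 2) ≤ n - 1 := by omega
  have h2j : 2 * j + 1 < n := by omega
  rw [Bpol_Qf]
  unfold BQ
  rw [Finset.sum_congr rfl (fun i hi => ?_), Finset.sum_ite_eq' (Finset.range ((n-1)/2)) j
    (fun _ => yc n x (2 * j))]
  rotate_left
  · rw [yc_ec n (2*j+1) h2j, yc_ec n (2*j+1) h2j]
    by_cases hij : i = j
    · subst hij
      rw [if_pos rfl, if_neg (by omega : ¬ 2*i = 2*i+1), if_pos rfl, mul_one, zero_mul,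
        add_zero]
    · rw [if_neg (by omega : ¬ 2*i+1 = 2*j+1), if_neg (by omega : ¬ 2*i = 2*j+1),
        if_neg hij, mul_zero, zero_mul, add_zero]
  · rw [if_pos (Finset.mem_range.mpr hj), add_zero]
    by_cases hpar : n % 2 = 0
    · rw [if_pos hpar, yc_ec n (2*j+1) h2j, yc_ec n (2*j+1) h2j,
        if_neg (by omega : ¬ n - 1 = 2*j+1), if_neg (by omega : ¬ n - 2 = 2*j+1),
        mul_zero, zero_mul, zero_add, add_zero, add_zero]
    · rw [if_neg hpar, add_zero]

lemma Qf_ec (n k : ℕ) (hk : k < 2 * ((n - 1) / 2)) : Qf n (ec n k) = 0 := by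
  have hp : 2 * ((n - 1) / 2) ≤ n - 1 := by omega
  have hkn : k < n := by omega
  unfold Qf
  have hsum : ∑ i ∈ Finset.range ((n - 1) / 2),
      yc n (ec n k) (2 * i) * yc n (ec n k) (2 * i + 1) = 0 := by
    apply Finset.sum_eq_zero
    intro i _
    rw [yc_ec n k hkn, yc_ec n k hkn]
    rcases eq_or_ne (2 * i) k with h | h
    · rw [if_neg (by omega : ¬ 2*i+1 = k), mul_zero]
    · rw [if_neg h, zero_mul]
  rw [hsum, zero_add, yc_ec n k hkn, if_neg (by omega : ¬ n - 1 = k)]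
  by_cases hpar : n % 2 = 0
  · rw [if_pos hpar, yc_ec n k hkn, if_neg (by omega : ¬ n - 2 = k)]
    simp
  · rw [if_neg hpar, add_zero]

def Cfl (n j : ℕ) : Submodule (ZMod 2) (Fin n → ZMod 2) where
  carrier := {x | ∀ i, i < 2 * j → yc n x i = 0}
  add_mem' := fun {a b} ha hb i hi => by rw [yc_add, ha i hi, hb i hi, add_zero]
  zero_mem' := fun i _ => yc_zero n i
  smul_mem' := fun c x hx i hi => by rw [yc_smul, hx i hi, mul_zero]

lemma mem_Cfl {n j : ℕ} {x : Fin n → ZMod 2} :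
    x ∈ Cfl n j ↔ ∀ i, i < 2 * j → yc n x i = 0 := Iff.rfl

lemma ec_mem_Cfl (n j k : ℕ) (hk : k < n) (h2j : 2 * j ≤ k) : ec n k ∈ Cfl n j := by
  rw [mem_Cfl]
  intro i hi
  rw [yc_ec n k hk, if_neg (by omega)]

lemma Cfl_base (n : ℕ) (W : Submodule (ZMod 2) (Fin n → ZMod 2))
    (hW : W ≤ Cfl n ((n - 1) / 2)) (h0 : ∀ x ∈ W, Qf n x = 0) : W = ⊥ := by
  have hp : 2 * ((n - 1) / 2) ≤ n - 1 := by omega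
  rw [eq_bot_iff]
  intro x hx
  have hC := mem_Cfl.mp (hW hx)
  have hQ := h0 x hx
  unfold Qf at hQ
  have hsum : ∑ i ∈ Finset.range ((n - 1) / 2),
      yc n x (2 * i) * yc n x (2 * i + 1) = 0 := by
    apply Finset.sum_eq_zero
    intro i hi
    rw [hC (2 * i) (by rw [Finset.mem_range] at hi; omega), zero_mul]
  rw [hsum, zero_add] at hQ
  have hcoord : ∀ i : Fin n, x i = yc n x (i : ℕ) := by
    intro i
    unfold yc
    rw [dif_pos i.isLt]
  have hx0 : x = 0 := by
    by_cases hpar : n % 2 = 0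
    · rw [if_pos hpar] at hQ
      have hkey : ∀ s t : ZMod 2, t + (s * t + s) = 0 → s = 0 ∧ t = 0 := by decide
      obtain ⟨hs, ht⟩ := hkey _ _ hQ
      funext i
      rw [hcoord i]
      have hi3 : (i : ℕ) < 2 * ((n - 1) / 2) ∨ (i : ℕ) = n - 2 ∨ (i : ℕ) = n - 1 := by
        have := i.isLt; omega
      rcases hi3 with h | h | h
      · exact hC _ h
      · rw [h]; exact hs
      · rw [h]; exact ht
    · rw [if_neg hpar, add_zero] at hQ
      funext i
      rw [hcoord i]
      have hi3 : (i : ℕ) < 2 * ((n - 1) / 2) ∨ (i : ℕ) = n - 1 := by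
        have := i.isLt; omega
      rcases hi3 with h | h
      · exact hC _ h
      · rw [h]; exact hQ
  rw [hx0]; exact Submodule.zero_mem ⊥

lemma Cfl_bound (n : ℕ) (t : ℕ) : ∀ j, j + t = (n - 1) / 2 →
    ∀ W : Submodule (ZMod 2) (Fin n → ZMod 2), W ≤ Cfl n j →
    (∀ x ∈ W, Qf n x = 0) → finrank (ZMod 2) W ≤ t := by
  induction t with
  | zero =>
    intro j hj W hW h0
    have hjp : j = (n - 1) / 2 := by omega
    subst hjp
    rw [Cfl_base n W hW h0, finrank_bot]
  | succ t ih =>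
    intro j hj W hW h0
    have hj' : j < (n - 1) / 2 := by omega
    have hp : 2 * ((n - 1) / 2) ≤ n - 1 := by omega
    have h2jn : 2 * j < n := by omega
    have h2j1n : 2 * j + 1 < n := by omega
    have hBab : Bpol (Qf n) (ec n (2 * j)) (ec n (2 * j + 1)) = 1 := by
      rw [Bpol_Qf_odd n j hj', yc_ec n (2*j) h2jn, if_pos rfl]
    refine strip' (Qf n) (quadF_Qf n) (Cfl n j) (ec n (2 * j)) (ec n (2 * j + 1))
      (ec_mem_Cfl n j (2 * j) h2jn le_rfl)
      (ec_mem_Cfl n j (2 * j + 1) h2j1n (by omega))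
      (Qf_ec n (2 * j) (by omega)) (Qf_ec n (2 * j + 1) (by omega)) hBab
      (ycL n (2 * j)) (ycL n (2 * j + 1))
      (fun x => (Bpol_Qf_odd n j hj' x).symm)
      (fun x => (Bpol_Qf_even n j hj' x).symm)
      t ?_ W hW h0
    intro T hT h0T
    refine ih (j + 1) (by omega) T ?_ h0T
    intro x hx
    obtain ⟨⟨hCj, hk1⟩, hk2⟩ := hT hx
    have hk1' : yc n x (2 * j) = 0 := hk1
    have hk2' : yc n x (2 * j + 1) = 0 := hk2
    rw [mem_Cfl]
    intro i hi
    rcases (by omega : i < 2 * j ∨ i = 2 * j ∨ i = 2 * j + 1) with h | h | h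
    · exact mem_Cfl.mp hCj i h
    · rw [h]; exact hk1'
    · rw [h]; exact hk2'

lemma Qf_bound (n : ℕ) (W : Submodule (ZMod 2) (Fin n → ZMod 2))
    (h0 : ∀ x ∈ W, Qf n x = 0) : finrank (ZMod 2) W ≤ (n - 1) / 2 := by
  refine Cfl_bound n ((n - 1) / 2) 0 (by omega) W ?_ h0
  intro x _
  rw [mem_Cfl]
  intro i hi
  omega

end Chunk8


/-- If `M ∈ ℰ₃` and `dim(M) = n` then `χ(M) ≤ ⌊n/2⌋ + 1`; moreover for
every `n ≥ 1` there is an `n`-dimensional `M ∈ ℰ₃` attaining equality. -/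
theorem stmt13 :
    (∀ M : BinMatroid, M.MemE 3 → M.critNum ≤ M.dim / 2 + 1) ∧
    (∀ n : ℕ, 1 ≤ n →
      ∃ M : BinMatroid, M.MemE 3 ∧ M.dim = n ∧ M.critNum = n / 2 + 1) := by
  constructor
  · -- Part 1
    intro M hM
    classical
    set f : (Fin M.dim → ZMod 2) → ZMod 2 :=
      fun x => if x ∈ M.E then 1 else 0 with hfdef
    have hf1 : ∀ x ∈ M.E, f x = 1 := fun x hx => if_pos hx
    have hf2 : ∀ x, x ∉ M.E → f x = 0 := fun x hx => if_neg hx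
    have hq : Stmt13Aux.QuadF f :=
      Chunk4.memE_quadF M.E M.zero_not_mem f hf1 hf2 hM
    obtain ⟨W, hW0, hWr⟩ := Chunk3.main_lemma M.dim (Fin M.dim → ZMod 2)
      inferInstance inferInstance inferInstance (Module.finrank_fin_fun (ZMod 2)) f hq
    have hWn : Module.finrank (ZMod 2) W ≤ M.dim := by
      have h := Submodule.finrank_le W
      rwa [Module.finrank_fin_fun] at h
    have hdisj : Disjoint ((W : Set (Fin M.dim → ZMod 2)) \ {0}) M.E := by
      rw [Set.disjoint_left]
      rintro x ⟨hxW, _⟩ hxE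
      exact one_ne_zero ((hf1 x hxE).symm.trans (hW0 x hxW))
    have hmem : (M.dim - Module.finrank (ZMod 2) W) ∈
        {k : ℕ | ∃ W' : Submodule (ZMod 2) (Fin M.dim → ZMod 2),
          Module.finrank (ZMod 2) W' = M.dim - k ∧
          Disjoint ((W' : Set (Fin M.dim → ZMod 2)) \ {0}) M.E} :=
      ⟨W, by omega, hdisj⟩
    have hle := Nat.sInf_le hmem
    have hcrit : M.critNum = sInf {k : ℕ | ∃ W' : Submodule (ZMod 2) (Fin M.dim → ZMod 2),
          Module.finrank (ZMod 2) W' = M.dim - k ∧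
          Disjoint ((W' : Set (Fin M.dim → ZMod 2)) \ {0}) M.E} := rfl
    rw [hcrit]
    omega
  · -- Part 2
    intro n hn
    set E : Set (Fin n → ZMod 2) := {x | Chunk8.Qf n x = 1} with hE
    have h0 : (0 : Fin n → ZMod 2) ∉ E := by
      intro h
      rw [hE, Set.mem_setOf_eq, Chunk8.Qf_zero] at h
      exact (by decide : ((0 : ZMod 2) ≠ 1)) h
    have hf1 : ∀ x ∈ E, Chunk8.Qf n x = 1 := fun x hx => hx
    have hf2 : ∀ x, x ∉ E → Chunk8.Qf n x = 0 := by
      intro x hx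
      rcases Stmt13Aux.z2cases (Chunk8.Qf n x) with h | h
      · exact h
      · exact absurd h hx
    have hMemE : ∀ W : Submodule (ZMod 2) (Fin n → ZMod 2),
        3 ≤ Module.finrank (ZMod 2) W →
        Even ((E ∩ ((W : Set (Fin n → ZMod 2)) \ {0})).ncard) := by
      intro W h3
      rw [Chunk4.even_bridge E h0 (Chunk8.Qf n) hf1 hf2 W]
      exact Chunk7.sum_quad_subspace (Chunk8.Qf n) (Chunk8.quadF_Qf n) W h3
    refine ⟨⟨n, E, h0⟩, hMemE, rfl, ?_⟩
    have hcrit : (⟨n, E, h0⟩ : BinMatroid).critNum =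
        sInf {k : ℕ | ∃ W' : Submodule (ZMod 2) (Fin n → ZMod 2),
          Module.finrank (ZMod 2) W' = n - k ∧
          Disjoint ((W' : Set (Fin n → ZMod 2)) \ {0}) E} := rfl
    rw [hcrit]
    have hlow : ∀ k ∈ {k : ℕ | ∃ W' : Submodule (ZMod 2) (Fin n → ZMod 2),
          Module.finrank (ZMod 2) W' = n - k ∧
          Disjoint ((W' : Set (Fin n → ZMod 2)) \ {0}) E}, n / 2 + 1 ≤ k := by
      rintro k ⟨W, hWr, hWd⟩
      have hsing : ∀ x ∈ W, Chunk8.Qf n x = 0 := by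
        intro x hx
        by_cases hx0 : x = 0
        · rw [hx0, Chunk8.Qf_zero]
        · exact hf2 x (Set.disjoint_left.mp hWd ⟨hx, hx0⟩)
      have hb := Chunk8.Qf_bound n W hsing
      rw [hWr] at hb
      omega
    obtain ⟨W, hW0, hWr⟩ := Chunk3.main_lemma n (Fin n → ZMod 2)
      inferInstance inferInstance inferInstance (Module.finrank_fin_fun (ZMod 2))
      (Chunk8.Qf n) (Chunk8.quadF_Qf n)
    have hWn : Module.finrank (ZMod 2) W ≤ n := by
      have h := Submodule.finrank_le W
      rwa [Module.finrank_fin_fun] at h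
    have hdisj : Disjoint ((W : Set (Fin n → ZMod 2)) \ {0}) E := by
      rw [Set.disjoint_left]
      rintro x ⟨hxW, _⟩ hxE
      exact one_ne_zero ((hf1 x hxE).symm.trans (hW0 x hxW))
    have hmem : (n - Module.finrank (ZMod 2) W) ∈
        {k : ℕ | ∃ W' : Submodule (ZMod 2) (Fin n → ZMod 2),
          Module.finrank (ZMod 2) W' = n - k ∧
          Disjoint ((W' : Set (Fin n → ZMod 2)) \ {0}) E} :=
      ⟨W, by omega, hdisj⟩
    have h1 := Nat.sInf_le hmem
    have h2 := hlow _ hmem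
    have h3 := hlow _ (Nat.sInf_mem ⟨_, hmem⟩)
    omega
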